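/- Let H be a connected finite simple graph on n vertices whose girth is finite, and let k satisfy girth(H) ≤ k < n. Then the maximum of unreach(B) over all k-element arc sets B of the transformer digraph G_H equals OPT_DS(H, k) + k; that is, OPT_DS(H, k) = OPT_EB(G_H, k) − k. -/

import Mathlib

open SimpleGraph

/-- `eCount H S` is the number of edges of `H` with both endpoints in `S`. -/
noncomputable def eCount {V : Type*} (H : SimpleGraph V) (S : Finset V) : ℕ :=
  {e : H.edgeSet | ∀ v ∈ (e : Sym2 V), v ∈ S}.ncard

/-- Vertices of the transformer digraph `G_H`: `none` is the node `z`, `some (Sum.inl v)` is the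
node `x_v` for a vertex `v` of `H`, and `some (Sum.inr e)` is the node `y_e` for an edge `e`
of `H`. -/
abbrev TVert {V : Type*} (H : SimpleGraph V) : Type _ := Option (V ⊕ ↥H.edgeSet)

/-- Arcs of the transformer digraph: `z → x_v` for every vertex `v`, and `x_v → y_e` whenever
`v` is an endpoint of the edge `e`. -/
def arc {V : Type*} (H : SimpleGraph V) : TVert H → TVert H → Prop
  | none, some (Sum.inl _) => True
  | some (Sum.inl v), some (Sum.inr e) => v ∈ (e : Sym2 V)
  | _, _ => False

/-- `unreach H B` is the number of vertices of the transformer digraph that are not reachable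
from `z` by a directed path using only arcs outside the blocked set `B`. -/
noncomputable def unreach {V : Type*} (H : SimpleGraph V)
    (B : Set (TVert H × TVert H)) : ℕ :=
  {w : TVert H | ¬ Relation.ReflTransGen (fun a b => arc H a b ∧ (a, b) ∉ B) none w}.ncard

/-- The Densest Subgraph value: the maximum of `eCount H S` over all `k`-element vertex sets. -/
noncomputable def optDS {V : Type*} [Fintype V] (H : SimpleGraph V) (k : ℕ) : ℕ :=
  (Finset.univ.powersetCard k).sup (fun S => eCount H S)

/-- The Edge Blocking optimum: the maximum of `unreach H B` over all `k`-element sets `B` of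
arcs of the transformer digraph. -/
noncomputable def optEB {V : Type*} (H : SimpleGraph V) (k : ℕ) : ℕ :=
  sSup {m | ∃ B : Finset (TVert H × TVert H),
    (∀ p ∈ B, arc H p.1 p.2) ∧ B.card = k ∧ unreach H ↑B = m}


section Aux

variable {V : Type*} (H : SimpleGraph V)

lemma reach_iff (B : Set (TVert H × TVert H)) (w : TVert H) :
    Relation.ReflTransGen (fun a b => arc H a b ∧ (a, b) ∉ B) none w ↔
      w = none ∨
      (∃ v : V, w = some (Sum.inl v) ∧ ((none : TVert H), some (Sum.inl v)) ∉ B) ∨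
      (∃ e : H.edgeSet, w = some (Sum.inr e) ∧ ∃ v : V, v ∈ (e : Sym2 V) ∧
        ((none : TVert H), some (Sum.inl v)) ∉ B ∧
        ((some (Sum.inl v) : TVert H), some (Sum.inr e)) ∉ B) := by
  constructor
  · intro h
    induction h with
    | refl => exact Or.inl rfl
    | @tail b w hb step ih =>
      obtain ⟨harc, hnB⟩ := step
      rcases ih with rfl | ⟨v, rfl, hv⟩ | ⟨e, rfl, _⟩
      · rcases w with _ | (v | e)
        · exact absurd harc (by simp [arc])
        · exact Or.inr (Or.inl ⟨v, rfl, hnB⟩)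
        · exact absurd harc (by simp [arc])
      · rcases w with _ | (u | e)
        · exact absurd harc (by simp [arc])
        · exact absurd harc (by simp [arc])
        · exact Or.inr (Or.inr ⟨e, rfl, v, harc, hv, hnB⟩)
      · exact absurd harc (by rcases w with _ | (u | f) <;> simp [arc])
  · rintro (rfl | ⟨v, rfl, hv⟩ | ⟨e, rfl, v, hmem, h1, h2⟩)
    · exact Relation.ReflTransGen.refl
    · exact Relation.ReflTransGen.single ⟨by simp [arc], hv⟩
    · exact Relation.ReflTransGen.head ⟨by simp [arc], h1⟩
        (Relation.ReflTransGen.single ⟨by simpa [arc] using hmem, h2⟩)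

lemma unreach_eq [Finite V] (B : Set (TVert H × TVert H)) :
    unreach H B = {v : V | ((none : TVert H), some (Sum.inl v)) ∈ B}.ncard +
      {e : H.edgeSet | ∀ v ∈ (e : Sym2 V),
        ((none : TVert H), some (Sum.inl v)) ∈ B ∨
        ((some (Sum.inl v) : TVert H), some (Sum.inr e)) ∈ B}.ncard := by
  have hset : {w : TVert H | ¬ Relation.ReflTransGen (fun a b => arc H a b ∧ (a, b) ∉ B) none w}
      = (fun v : V => (some (Sum.inl v) : TVert H)) ''
          {v : V | ((none : TVert H), some (Sum.inl v)) ∈ B} ∪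
        (fun e : H.edgeSet => (some (Sum.inr e) : TVert H)) ''
          {e : H.edgeSet | ∀ v ∈ (e : Sym2 V),
            ((none : TVert H), some (Sum.inl v)) ∈ B ∨
            ((some (Sum.inl v) : TVert H), some (Sum.inr e)) ∈ B} := by
    ext w
    rcases w with _ | (v | e)
    · constructor
      · intro h; exact absurd ((reach_iff H B none).mpr (Or.inl rfl)) h
      · rintro (⟨v, -, h⟩ | ⟨e, -, h⟩) <;> simp at h
    · constructor
      · intro h
        left
        refine ⟨v, ?_, rfl⟩
        by_contra hc
        exact h ((reach_iff H B _).mpr (Or.inr (Or.inl ⟨v, rfl, hc⟩)))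
      · rintro (⟨u, hu, h⟩ | ⟨e, -, h⟩)
        · obtain rfl : u = v := by simpa using h
          intro hr
          rcases (reach_iff H B _).mp hr with h' | ⟨v', hv', h2⟩ | ⟨e, he, -⟩
          · simp at h'
          · obtain rfl : u = v' := by simpa using hv'
            exact h2 hu
          · simp at he
        · simp at h
    · constructor
      · intro h
        right
        refine ⟨e, ?_, rfl⟩
        intro v hv
        by_contra hc
        push_neg at hc
        exact h ((reach_iff H B _).mpr (Or.inr (Or.inr ⟨e, rfl, v, hv, hc.1, hc.2⟩)))
      · rintro (⟨u, -, h⟩ | ⟨e', he', h⟩)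
        · simp at h
        · obtain rfl : e' = e := by simpa using h
          intro hr
          rcases (reach_iff H B _).mp hr with h' | ⟨v', hv', -⟩ | ⟨e'', he'', v, hv, h1, h2⟩
          · simp at h'
          · simp at hv'
          · obtain rfl : e' = e'' := by simpa using he''
            rcases he' v hv with hh | hh
            · exact h1 hh
            · exact h2 hh
  have hdisj : Disjoint ((fun v : V => (some (Sum.inl v) : TVert H)) ''
      {v : V | ((none : TVert H), some (Sum.inl v)) ∈ B})
      ((fun e : H.edgeSet => (some (Sum.inr e) : TVert H)) ''
        {e : H.edgeSet | ∀ v ∈ (e : Sym2 V),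
          ((none : TVert H), some (Sum.inl v)) ∈ B ∨
          ((some (Sum.inl v) : TVert H), some (Sum.inr e)) ∈ B}) := by
    rw [Set.disjoint_left]
    rintro x ⟨v, -, rfl⟩ ⟨e, -, h⟩
    simp at h
  rw [unreach, hset, Set.ncard_union_eq hdisj (Set.toFinite _) (Set.toFinite _),
    Set.ncard_image_of_injective _ (fun a b h => by simpa using h),
    Set.ncard_image_of_injective _ (fun a b h => by simpa using h)]

variable [Fintype V]

lemma eCount_mono {S T : Finset V} (hST : S ⊆ T) : eCount H S ≤ eCount H T := by
  apply Set.ncard_le_ncard _ (Set.toFinite _)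
  intro e he v hv
  exact hST (he v hv)

lemma eCount_le_optDS {T : Finset V} {k : ℕ} (hT : T.card = k) :
    eCount H T ≤ optDS H k :=
  Finset.le_sup (Finset.mem_powersetCard_univ.mpr hT)

lemma unreach_vertexBlock [DecidableEq (TVert H × TVert H)] (S : Finset V) :
    unreach H ↑(S.image fun v => ((none : TVert H), (some (Sum.inl v) : TVert H)))
      = S.card + eCount H S := by
  rw [unreach_eq]
  congr 1
  · have h1 : {v : V | ((none : TVert H), some (Sum.inl v)) ∈
        (↑(S.image fun v => ((none : TVert H), (some (Sum.inl v) : TVert H))) :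
          Set (TVert H × TVert H))} = ↑S := by
      ext v
      simp
    rw [h1, Set.ncard_coe_finset]
  · rw [eCount]
    congr 1
    ext e
    simp only [Set.mem_setOf_eq, Finset.coe_image, Set.mem_image, Finset.mem_coe,
      Prod.mk.injEq]
    constructor
    · intro h v hv
      rcases h v hv with ⟨u, hu, -, h2⟩ | ⟨u, -, h1, -⟩
      · obtain rfl : u = v := by simpa using h2
        exact hu
      · simp at h1
    · intro h v hv
      exact Or.inl ⟨v, h v hv, trivial, rfl⟩

lemma unreach_le (B : Finset (TVert H × TVert H)) (harcs : ∀ p ∈ B, arc H p.1 p.2)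
    (k : ℕ) (hB : B.card = k) (hk : k ≤ Fintype.card V) :
    unreach H ↑B ≤ optDS H k + k := by
  classical
  rw [unreach_eq]
  set B₁ := B.filter (fun p => p.1 = none) with hB₁
  set B₂ := B.filter (fun p => ¬ p.1 = none) with hB₂
  have hsplit : B₁.card + B₂.card = k := by
    rw [hB₁, hB₂, Finset.card_filter_add_card_filter_not, hB]
  set A1 : Set V := {v : V | ((none : TVert H), some (Sum.inl v)) ∈ (↑B : Set (TVert H × TVert H))} with hA1
  have hA1fin : A1.Finite := Set.toFinite _
  set S₀ : Finset V := hA1fin.toFinset with hS₀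
  have hS₀mem : ∀ v, v ∈ S₀ ↔ v ∈ A1 := fun v => Set.Finite.mem_toFinset hA1fin
  have hA1card : A1.ncard ≤ B₁.card := by
    have himg : (fun v : V => (((none : TVert H), some (Sum.inl v)) :
        TVert H × TVert H)) '' A1 ⊆ ↑B₁ := by
      rintro p ⟨v, hv, rfl⟩
      simp only [hB₁, Finset.coe_filter, Set.mem_setOf_eq]
      exact ⟨hv, trivial⟩
    calc A1.ncard
        = ((fun v : V => (((none : TVert H), some (Sum.inl v)) :
            TVert H × TVert H)) '' A1).ncard :=
          (Set.ncard_image_of_injective _ (fun a b h => by simpa using h)).symm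
      _ ≤ (↑B₁ : Set (TVert H × TVert H)).ncard :=
          Set.ncard_le_ncard himg (B₁.finite_toSet)
      _ = B₁.card := Set.ncard_coe_finset _
  have hS₀card : S₀.card = A1.ncard := (Set.ncard_eq_toFinset_card A1 hA1fin).symm
  -- bound the second summand
  have hA2 : {e : H.edgeSet | ∀ v ∈ (e : Sym2 V),
        ((none : TVert H), some (Sum.inl v)) ∈ (↑B : Set (TVert H × TVert H)) ∨
        ((some (Sum.inl v) : TVert H), some (Sum.inr e)) ∈ (↑B : Set (TVert H × TVert H))}.ncard
      ≤ eCount H S₀ + B₂.card := by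
    set D : Set H.edgeSet := {e : H.edgeSet | ∃ v : V, v ∈ (e : Sym2 V) ∧
        ((some (Sum.inl v) : TVert H), some (Sum.inr e)) ∈ B₂} with hD
    have hsub : {e : H.edgeSet | ∀ v ∈ (e : Sym2 V),
        ((none : TVert H), some (Sum.inl v)) ∈ (↑B : Set (TVert H × TVert H)) ∨
        ((some (Sum.inl v) : TVert H), some (Sum.inr e)) ∈ (↑B : Set (TVert H × TVert H))}
        ⊆ {e : H.edgeSet | ∀ v ∈ (e : Sym2 V), v ∈ S₀} ∪ D := by
      intro e he
      by_cases hall : ∀ v ∈ (e : Sym2 V), v ∈ S₀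
      · exact Or.inl hall
      · right
        push_neg at hall
        obtain ⟨v, hv, hvS⟩ := hall
        rcases he v hv with h | h
        · exact absurd ((hS₀mem v).mpr h) hvS
        · exact ⟨v, hv, Finset.mem_filter.mpr ⟨h, by simp⟩⟩
    have hDcard : D.ncard ≤ B₂.card := by
      set g : TVert H × TVert H → Option H.edgeSet := fun p =>
        match p.2 with
        | some (Sum.inr e) => some e
        | _ => none
      have himg : (fun e : H.edgeSet => (some e : Option H.edgeSet)) '' D
          ⊆ g '' ↑B₂ := by
        rintro x ⟨e, ⟨v, hv, hmem⟩, rfl⟩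
        exact ⟨_, hmem, rfl⟩
      calc D.ncard
          = ((fun e : H.edgeSet => (some e : Option H.edgeSet)) '' D).ncard :=
            (Set.ncard_image_of_injective _ (fun a b h => by simpa using h)).symm
        _ ≤ (g '' ↑B₂).ncard := Set.ncard_le_ncard himg (Set.toFinite _)
        _ ≤ (↑B₂ : Set (TVert H × TVert H)).ncard := Set.ncard_image_le (B₂.finite_toSet)
        _ = B₂.card := Set.ncard_coe_finset _
    calc {e : H.edgeSet | ∀ v ∈ (e : Sym2 V),
          ((none : TVert H), some (Sum.inl v)) ∈ (↑B : Set (TVert H × TVert H)) ∨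
          ((some (Sum.inl v) : TVert H), some (Sum.inr e)) ∈ (↑B : Set (TVert H × TVert H))}.ncard
        ≤ ({e : H.edgeSet | ∀ v ∈ (e : Sym2 V), v ∈ S₀} ∪ D).ncard :=
          Set.ncard_le_ncard hsub (Set.toFinite _)
      _ ≤ {e : H.edgeSet | ∀ v ∈ (e : Sym2 V), v ∈ S₀}.ncard + D.ncard :=
          Set.ncard_union_le _ _
      _ ≤ eCount H S₀ + B₂.card := by
          rw [eCount]; exact Nat.add_le_add le_rfl hDcard
  have hext : eCount H S₀ ≤ optDS H k := by
    obtain ⟨T, hST, hTB, hTcard⟩ := Finset.exists_subsuperset_card_eq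
      (n := k) (Finset.subset_univ S₀) (by omega) (by simpa using hk)
    exact le_trans (eCount_mono H hST) (eCount_le_optDS H hTcard)
  calc A1.ncard + {e : H.edgeSet | ∀ v ∈ (e : Sym2 V),
        ((none : TVert H), some (Sum.inl v)) ∈ (↑B : Set (TVert H × TVert H)) ∨
        ((some (Sum.inl v) : TVert H), some (Sum.inr e)) ∈ (↑B : Set (TVert H × TVert H))}.ncard
      ≤ B₁.card + (eCount H S₀ + B₂.card) := Nat.add_le_add hA1card hA2
    _ ≤ B₁.card + (optDS H k + B₂.card) := Nat.add_le_add le_rfl (Nat.add_le_add hext le_rfl)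
    _ = B₁.card + B₂.card + optDS H k := by omega
    _ = optDS H k + k := by omega

end Aux

theorem stmt12 {V : Type*} [Fintype V] (H : SimpleGraph V) (hconn : H.Connected)
    (hfin : H.egirth ≠ ⊤) (k : ℕ) (hg : H.egirth ≤ (k : ℕ∞)) (hkn : k < Fintype.card V) :
    optEB H k = optDS H k + k ∧ optDS H k = optEB H k - k := by
  classical
  have hk : k ≤ Fintype.card V := hkn.le
  obtain ⟨S, hSmem, hSval⟩ := Finset.exists_mem_eq_sup (Finset.univ.powersetCard k)
    (Finset.powersetCard_nonempty.mpr (by simpa using hk)) (fun S => eCount H S)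
  have hScard : S.card = k := Finset.mem_powersetCard_univ.mp hSmem
  have hmain : optEB H k = optDS H k + k := by
    apply IsGreatest.csSup_eq
    constructor
    · refine ⟨S.image fun v => ((none : TVert H), (some (Sum.inl v) : TVert H)), ?_, ?_, ?_⟩
      · intro p hp
        simp only [Finset.mem_image] at hp
        obtain ⟨v, -, rfl⟩ := hp
        simp [arc]
      · rw [Finset.card_image_of_injective _ (fun a b h => by simpa using h), hScard]
      · rw [unreach_vertexBlock H S, hScard, ← hSval]
        exact Nat.add_comm _ _ ▸ rfl
    · rintro m ⟨B, harcs, hBcard, rfl⟩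
      exact unreach_le H B harcs k hBcard hk
  exact ⟨hmain, by omega⟩
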